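/- Let (H, α, σ) be a unicellular map of genus g with n edges, with the order <_m induced by the root and face γ = ασ. A down-step h (i.e. σ(h) ≤_m h) is a trisection if σ(h) is not the minimal element, for <_m, of the cycle of σ containing h. Then the number of trisections of the map equals exactly 2g. -/

import Mathlib

open Equiv

/-- Number of cycles of a permutation (fixed points count as cycles). -/
noncomputable def cycleCount {H : Type*} [Fintype H] [DecidableEq H]
    (σ : Equiv.Perm H) : ℕ :=
  σ.cycleType.card + Fintype.card {x // σ x = x}

/-- the trisection lemma: in a rooted unicellular map
`(H, α, σ)` of genus `g` with `n` edges (order `<ₘ` encoded by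
`ord : Fin (2n) ≃ H` as usual), a down-step `h` (i.e. `σ(h) ≤ₘ h`) is a
trisection if `σ(h)` is not the `<ₘ`-minimal element of the cycle of `σ`
containing `h` (equivalently, some element of that cycle is `<ₘ`-smaller
than `σ(h)`).  The number of trisections equals `2g`. -/
theorem trisections_count {H : Type*} [Fintype H] [DecidableEq H]
    (n g : ℕ) (hn : 1 ≤ n) (hcard : Fintype.card H = 2 * n)
    (α σ : Equiv.Perm H)
    (hinv : α * α = 1) (hfp : ∀ h : H, α h ≠ h)
    (hface : (α * σ).IsCycle ∧ (α * σ).support = Finset.univ)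
    (hgenus : cycleCount σ + 2 * g = n + 1)
    (r : H) (ord : Fin (2 * n) ≃ H)
    (hord0 : ord ⟨0, by omega⟩ = r)
    (hordsucc : ∀ k : Fin (2 * n), (α * σ) (ord k) = ord (k + ⟨1, by omega⟩)) :
    (Finset.univ.filter (fun h : H =>
        ord.symm (σ h) ≤ ord.symm h ∧
        ∃ x : H, σ.SameCycle h x ∧ ord.symm x < ord.symm (σ h))).card
      = 2 * g := by
  classical
  set f : H → Fin (2 * n) := fun h => ord.symm h with hfdef
  have hfinj : Function.Injective f := ord.symm.injective
  have hfo : ∀ x : Fin (2 * n), f (ord x) = x := fun x => ord.symm_apply_apply x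
  have hof : ∀ h : H, ord (f h) = h := fun h => ord.apply_symm_apply h
  have hαα : ∀ h : H, α (α h) = h := by
    intro h
    have := congrArg (fun p : Perm H => p h) hinv
    simpa [Perm.mul_apply] using this
  have hσα : ∀ h : H, σ h = α ((α * σ) h) := by
    intro h; simp [Perm.mul_apply, hαα]
  have hγ : ∀ h : H, (α * σ) h = ord (f h + ⟨1, by omega⟩) := by
    intro h
    rw [← hordsucc (f h), hof]
  have hγval : ∀ h : H, ((f ((α * σ) h)) : ℕ) = (((f h) : ℕ) + 1) % (2 * n) := by
    intro h; rw [hγ, hfo]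
    simp [Fin.add_def]
  have hrval : ((f r : Fin (2 * n)) : ℕ) = 0 := by
    rw [← hord0, hfo]
  have hzero : ∀ h : H, ((f h : Fin (2 * n)) : ℕ) = 0 → h = r := by
    intro h hh
    apply hfinj
    apply Fin.ext
    rw [hh, hrval]
  -- the sets
  set D : Finset H := Finset.univ.filter (fun h => f (σ h) ≤ f h) with hDdef
  set S : Finset H := Finset.univ.filter (fun k => f (α k) < f k) with hSdef
  set N : Finset H := Finset.univ.filter
    (fun h => ∀ x : H, σ.SameCycle h x → f (σ h) ≤ f x) with hNdef
  set M : Finset H := Finset.univ.filter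
    (fun m => ∀ x : H, σ.SameCycle m x → f m ≤ f x) with hMdef
  have huniv : (Finset.univ : Finset H).card = 2 * n := by
    rw [Finset.card_univ, hcard]
  -- Step A': S.card = n
  have hαne : ∀ k : H, f (α k) ≠ f k := fun k he => hfp k (hfinj he)
  have hScard : S.card = n := by
    have hb : S.card = (Finset.univ.filter (fun k => ¬ f (α k) < f k)).card := by
      apply Finset.card_nbij (i := fun k => α k)
      · intro a ha
        simp only [hSdef, Finset.coe_filter, Set.mem_setOf_eq, Finset.mem_filter, Finset.mem_univ, true_and] at ha ⊢
        rw [hαα]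
        exact not_lt.2 ha.le
      · intro a _ b _ hab
        exact α.injective hab
      · intro b hb
        simp only [Finset.coe_filter, Set.mem_setOf_eq, Finset.mem_univ, true_and] at hb
        refine ⟨α b, ?_, hαα b⟩
        simp only [hSdef, Finset.coe_filter, Set.mem_setOf_eq, Finset.mem_univ, true_and]
        rw [hαα]
        exact lt_of_le_of_ne (not_lt.1 hb) (hαne b).symm
    have hsum := Finset.card_filter_add_card_filter_not
      (s := (Finset.univ : Finset H)) (p := fun k => f (α k) < f k)
    rw [huniv] at hsum
    rw [hSdef] at hb ⊢
    omega
  have hrS : r ∉ S := by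
    simp only [hSdef, Finset.mem_filter, Finset.mem_univ, true_and]
    intro hlt
    rw [Fin.lt_def, hrval] at hlt
    omega
  -- Step A: D.card = n + 1
  have hDcard : D.card = n + 1 := by
    have hb : D.card = (insert r S).card := by
      apply Finset.card_nbij (i := fun h => (α * σ) h)
      · intro a ha
        simp only [hDdef, Finset.coe_filter, Set.mem_setOf_eq, Finset.mem_filter, Finset.mem_univ, true_and] at ha
        simp only [Finset.mem_coe]
        by_cases hc : ((f a : Fin (2 * n)) : ℕ) + 1 = 2 * n
        · have h0 : ((f ((α * σ) a) : Fin (2 * n)) : ℕ) = 0 := by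
            rw [hγval, hc, Nat.mod_self]
          rw [hzero _ h0]
          exact Finset.mem_insert_self _ _
        · have hlt : ((f a : Fin (2 * n)) : ℕ) + 1 < 2 * n := by
            have := (f a).isLt; omega
          have hv : ((f ((α * σ) a) : Fin (2 * n)) : ℕ) = ((f a : Fin (2 * n)) : ℕ) + 1 := by
            rw [hγval, Nat.mod_eq_of_lt hlt]
          apply Finset.mem_insert_of_mem
          simp only [hSdef, Finset.mem_filter, Finset.mem_univ, true_and]
          rw [Fin.lt_def, hv, ← hσα]
          rw [Fin.le_def] at ha
          omega
      · intro a _ b _ hab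
        exact (α * σ).injective hab
      · intro b hb
        simp only [Finset.coe_insert, Set.mem_insert_iff, Finset.mem_coe] at hb
        refine ⟨(α * σ)⁻¹ b, ?_, Equiv.apply_symm_apply _ _⟩
        have hab : (α * σ) ((α * σ)⁻¹ b) = b := Equiv.apply_symm_apply _ _
        have hσb : σ ((α * σ)⁻¹ b) = α b := by rw [hσα, hab]
        simp only [hDdef, Finset.coe_filter, Set.mem_setOf_eq, Finset.mem_univ, true_and]
        rw [hσb, Fin.le_def]
        have hval : ((f b : Fin (2 * n)) : ℕ)
            = (((f ((α * σ)⁻¹ b) : Fin (2 * n)) : ℕ) + 1) % (2 * n) := by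
          rw [← hγval, hab]
        rcases hb with hb | hb
        · have hb0 : ((f b : Fin (2 * n)) : ℕ) = 0 := by rw [hb, hrval]
          rw [hb0] at hval
          have h1 := (f ((α * σ)⁻¹ b)).isLt
          have h2 := (f (α b)).isLt
          have : ((f ((α * σ)⁻¹ b) : Fin (2 * n)) : ℕ) = 2 * n - 1 := by
            rcases Nat.lt_or_ge (((f ((α * σ)⁻¹ b) : Fin (2 * n)) : ℕ) + 1) (2 * n) with h | h
            · rw [Nat.mod_eq_of_lt h] at hval; omega
            · omega
          omega
        · simp only [hSdef, Finset.mem_filter, Finset.mem_univ, true_and, Fin.lt_def] at hb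
          have h1 := (f ((α * σ)⁻¹ b)).isLt
          rcases Nat.lt_or_ge (((f ((α * σ)⁻¹ b) : Fin (2 * n)) : ℕ) + 1) (2 * n) with h | h
          · rw [Nat.mod_eq_of_lt h] at hval; omega
          · have : ((f ((α * σ)⁻¹ b) : Fin (2 * n)) : ℕ) + 1 = 2 * n := by omega
            rw [this, Nat.mod_self] at hval
            omega
    rw [hb, Finset.card_insert_of_notMem hrS, hScard]
  -- Step B: N.card = M.card
  have hNM : N.card = M.card := by
    apply Finset.card_nbij (i := fun h => σ h)
    · intro a ha
      simp only [hNdef, hMdef, Finset.coe_filter, Set.mem_setOf_eq, Finset.mem_filter, Finset.mem_univ, true_and] at ha ⊢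
      intro x hx
      exact ha x (Perm.sameCycle_apply_left.1 hx)
    · intro a _ b _ hab
      exact σ.injective hab
    · intro b hb
      simp only [hMdef, Finset.coe_filter, Set.mem_setOf_eq, Finset.mem_univ, true_and] at hb
      refine ⟨σ⁻¹ b, ?_, Equiv.apply_symm_apply _ _⟩
      simp only [hNdef, Finset.coe_filter, Set.mem_setOf_eq, Finset.mem_univ, true_and]
      intro x hx
      rw [show σ (σ⁻¹ b) = b from Equiv.apply_symm_apply σ b]
      exact hb x (Perm.sameCycle_symm_apply_left.1 hx)
  -- Step B': M.card = cycleCount σ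
  have hMcard : M.card = cycleCount σ := by
    have hfixeq : M.filter (fun m => σ m = m) = Finset.univ.filter (fun m => σ m = m) := by
      ext m
      simp only [hMdef, Finset.mem_filter, Finset.mem_univ, true_and]
      constructor
      · rintro ⟨-, h⟩; exact h
      · intro h
        refine ⟨?_, h⟩
        intro x hx
        obtain ⟨i, hi⟩ := hx
        rw [Perm.zpow_apply_eq_self_of_apply_eq_self h i] at hi
        rw [← hi]
    have hfixcard : (Finset.univ.filter (fun m => σ m = m)).card
        = Fintype.card {x // σ x = x} := (Fintype.card_subtype _).symm
    have hsuppcard : (M.filter (fun m => ¬ σ m = m)).card = σ.cycleFactorsFinset.card := by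
      apply Finset.card_nbij (i := fun m => σ.cycleOf m)
      · intro a ha
        simp only [Finset.coe_filter, Set.mem_setOf_eq, Finset.mem_filter] at ha
        exact Perm.cycleOf_mem_cycleFactorsFinset_iff.2 (Perm.mem_support.2 ha.2)
      · intro a ha b hb hab
        simp only [Finset.coe_filter, Set.mem_setOf_eq, hMdef, Finset.mem_filter,
          Finset.mem_univ, true_and] at ha hb
        have hbs : b ∈ (σ.cycleOf b).support := by
          rw [Perm.mem_support_cycleOf_iff]
          exact ⟨Perm.SameCycle.refl _ _, Perm.mem_support.2 hb.2⟩
        have hab' : σ.cycleOf a = σ.cycleOf b := hab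
        rw [← hab'] at hbs
        have hsc : σ.SameCycle a b := (Perm.mem_support_cycleOf_iff.1 hbs).1
        exact hfinj (le_antisymm (ha.1 b hsc) (hb.1 a hsc.symm))
      · intro c hc
        simp only [Finset.mem_coe] at hc
        have hcyc := (Perm.mem_cycleFactorsFinset_iff.1 hc)
        have hne : c.support.Nonempty := hcyc.1.nonempty_support
        obtain ⟨m, hm, hmin⟩ := Finset.exists_min_image c.support f hne
        have hsm : σ m ≠ m := by
          rw [← hcyc.2 m hm]
          exact Perm.mem_support.1 hm
        have hco : σ.cycleOf m = c := (Perm.cycle_is_cycleOf hm hc).symm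
        refine ⟨m, ?_, hco⟩
        simp only [Finset.coe_filter, Set.mem_setOf_eq, hMdef, Finset.mem_filter,
          Finset.mem_univ, true_and]
        refine ⟨?_, hsm⟩
        intro x hx
        have hxs : x ∈ (σ.cycleOf m).support := by
          rw [Perm.mem_support_cycleOf_iff]
          exact ⟨hx, Perm.mem_support.2 hsm⟩
        rw [hco] at hxs
        exact hmin x hxs
    have hsum := Finset.card_filter_add_card_filter_not
      (s := M) (p := fun m => σ m = m)
    have hct : σ.cycleType.card = σ.cycleFactorsFinset.card := by
      simp [Perm.cycleType]
    have h1 : (M.filter (fun m => σ m = m)).card = Fintype.card {x // σ x = x} := by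
      rw [hfixeq]; exact hfixcard
    unfold cycleCount
    omega
  -- Step C: the trisection set is D \ N
  have hNsub : N ⊆ D := by
    intro h hh
    simp only [hNdef, hDdef, Finset.mem_filter, Finset.mem_univ, true_and] at hh ⊢
    exact hh h (Perm.SameCycle.refl _ _)
  have hT : (Finset.univ.filter (fun h : H =>
        f (σ h) ≤ f h ∧
        ∃ x : H, σ.SameCycle h x ∧ f x < f (σ h))) = D \ N := by
    ext h
    simp only [hDdef, hNdef, Finset.mem_sdiff, Finset.mem_filter, Finset.mem_univ, true_and]
    constructor
    · rintro ⟨hd, x, hx, hlt⟩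
      exact ⟨hd, fun hall => absurd (hall x hx) (not_le.2 hlt)⟩
    · rintro ⟨hd, hnall⟩
      push_neg at hnall
      obtain ⟨x, hx, hlt⟩ := hnall
      exact ⟨hd, x, hx, hlt⟩
  calc (Finset.univ.filter (fun h : H =>
        f (σ h) ≤ f h ∧
        ∃ x : H, σ.SameCycle h x ∧ f x < f (σ h))).card
      = (D \ N).card := by rw [hT]
    _ = D.card - N.card := Finset.card_sdiff_of_subset hNsub
    _ = 2 * g := by
        have := Finset.card_le_card hNsub
        rw [hDcard, hNM, hMcard] at *
        omega
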